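/- Let a, b ∈ ℂ[[x,y]] be formal power series, not both zero, and consider the 1-form ω = a dx + b dy. Suppose the quotient ring ℂ[[x,y]]/(a,b) is a finite-dimensional ℂ-vector space, of dimension μ (the Milnor number of the foliation defined by ω). Let ν = min(ord(a), ord(b)) be the algebraic multiplicity of ω. Then ν(ν+1)/2 ≤ μ. (This is the paper's claim that the algebraic multiplicity of a foliation is topologically bounded.) -/

import Mathlib

open MvPowerSeries Finsupp

private lemma tri_sum : ∀ n : ℕ, 2 * (∑ i ∈ Finset.range n, (n - i)) = n * (n + 1) := by
  intro n
  induction n with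
  | zero => simp
  | succ n ih =>
    rw [Finset.sum_range_succ']
    simp only [Nat.succ_sub_succ, Nat.sub_zero]
    rw [Nat.mul_add, ih]
    ring

private lemma degree_pair (i j : ℕ) :
    Finsupp.degree (Finsupp.single (0 : Fin 2) i + Finsupp.single (1 : Fin 2) j) = i + j := by
  rw [Finsupp.degree_eq_weight_one, map_add]
  simp [Finsupp.weight_apply, Finsupp.sum_single_index]

private lemma pair_inj {i j i' j' : ℕ}
    (h : Finsupp.single (0 : Fin 2) i + Finsupp.single (1 : Fin 2) j
       = Finsupp.single (0 : Fin 2) i' + Finsupp.single (1 : Fin 2) j') :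
    i = i' ∧ j = j' := by
  constructor
  · have := DFunLike.congr_fun h (0 : Fin 2)
    simpa [Finsupp.single_apply] using this
  · have := DFunLike.congr_fun h (1 : Fin 2)
    simpa [Finsupp.single_apply, Fin.ext_iff] using this

/-- **Topological boundedness of the algebraic multiplicity.**
If `ω = a dx + b dy` (with `a`, `b` formal power series in two variables, not both zero)
defines a foliation whose Milnor number `μ = dim_ℂ ℂ[[x,y]]/(a,b)` is finite, and
`ν = min(ord a, ord b)` is the algebraic multiplicity, then `ν(ν+1)/2 ≤ μ`. -/
theorem stmt_0 (a b : MvPowerSeries (Fin 2) ℂ) (hab : ¬(a = 0 ∧ b = 0)) (ν : ℕ)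
    (hν : (ν : ℕ∞) = min a.order b.order)
    [FiniteDimensional ℂ
      (MvPowerSeries (Fin 2) ℂ ⧸ (Ideal.span {a, b} : Ideal (MvPowerSeries (Fin 2) ℂ)))]
    (μ : ℕ)
    (hμ : μ = Module.finrank ℂ
      (MvPowerSeries (Fin 2) ℂ ⧸ (Ideal.span {a, b} : Ideal (MvPowerSeries (Fin 2) ℂ)))) :
    ν * (ν + 1) / 2 ≤ μ := by
  set I : Ideal (MvPowerSeries (Fin 2) ℂ) := Ideal.span {a, b} with hI
  -- order bounds
  have hνa : (ν : ℕ∞) ≤ a.order := by rw [hν]; exact min_le_left _ _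
  have hνb : (ν : ℕ∞) ≤ b.order := by rw [hν]; exact min_le_right _ _
  -- index set of monomials of degree < ν
  set S : Finset ((_ : ℕ) × ℕ) :=
    (Finset.range ν).sigma (fun i => Finset.range (ν - i)) with hS
  have hScard : S.card = ∑ i ∈ Finset.range ν, (ν - i) := by
    simp [hS, Finset.card_sigma]
  -- exponent of a monomial
  set d : (Σ _ : ℕ, ℕ) → (Fin 2 →₀ ℕ) :=
    fun s => Finsupp.single (0 : Fin 2) s.1 + Finsupp.single (1 : Fin 2) s.2 with hd
  have hdeg : ∀ s ∈ S, Finsupp.degree (d s) < ν := by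
    intro s hs
    simp only [hS, Finset.mem_sigma, Finset.mem_range] at hs
    rw [hd]
    simpa [degree_pair] using by omega
  -- coefficients of elements of I of degree < ν vanish
  have hcoeff : ∀ g ∈ I, ∀ e : Fin 2 →₀ ℕ, Finsupp.degree e < ν →
      MvPowerSeries.coeff e g = 0 := by
    intro g hg e he
    obtain ⟨u, w, huw⟩ := Ideal.mem_span_pair.mp hg
    have key : ∀ (f c : MvPowerSeries (Fin 2) ℂ), (ν : ℕ∞) ≤ c.order →
        MvPowerSeries.coeff e (f * c) = 0 := by
      intro f c hc
      rw [MvPowerSeries.coeff_mul]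
      apply Finset.sum_eq_zero
      intro p hp
      rw [Finset.HasAntidiagonal.mem_antidiagonal] at hp
      have hdp : Finsupp.degree p.2 < ν := by
        have : Finsupp.degree p.1 + Finsupp.degree p.2 = Finsupp.degree e := by
          rw [← hp, Finsupp.degree_eq_weight_one, map_add]
        omega
      have : ((Finsupp.degree p.2 : ℕ) : ℕ∞) < c.order :=
        lt_of_lt_of_le (by exact_mod_cast hdp) hc
      rw [MvPowerSeries.coeff_of_lt_order this, mul_zero]
    rw [← huw, map_add, key u a hνa, key w b hνb, add_zero]
  -- the family of monomials in the quotient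
  set mk := (Ideal.Quotient.mkₐ ℂ I).toLinearMap with hmk
  set v : S → MvPowerSeries (Fin 2) ℂ ⧸ I := fun s => mk (MvPowerSeries.monomial (d s.1) 1) with hv
  have hli : LinearIndependent ℂ v := by
    rw [Fintype.linearIndependent_iff]
    intro c hc s
    set g : MvPowerSeries (Fin 2) ℂ := ∑ t : S, c t • MvPowerSeries.monomial (d t.1) 1 with hg
    have hgI : g ∈ I := by
      rw [← Ideal.Quotient.eq_zero_iff_mem (I := I)]
      have : Ideal.Quotient.mk I g = mk g := rfl
      rw [this, map_sum]
      simpa only [map_smul] using hc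
    have := hcoeff g hgI (d s.1) (hdeg s.1 s.2)
    rw [hg, map_sum] at this
    rw [← this]
    rw [Finset.sum_eq_single s]
    · simp [MvPowerSeries.coeff_monomial_same]
    · intro t _ hts
      have hne : d t.1 ≠ d s.1 := by
        intro h
        obtain ⟨h1, h2⟩ := pair_inj h
        apply hts
        ext <;> simp [h1, h2]
      simp [MvPowerSeries.coeff_smul, MvPowerSeries.coeff_monomial, Ne.symm hne]
    · intro h
      exact absurd (Finset.mem_univ s) h
  have hcard : Fintype.card S ≤ μ := by
    rw [hμ]
    exact hli.fintype_card_le_finrank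
  rw [Fintype.card_coe, hScard] at hcard
  have := tri_sum ν
  omega
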